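/- Let G₁ and G₂ be simple graphs with γ(G₁) ≥ 3, γ(G₂) ≥ 3, such that G₁ is disconnected, with vertices u, w in distinct connected components of G₁ and v ∈ V(G₂). Then the dominating sets D_s = {u, v} and D_t = {w, v} of the join G = G₁ + G₂ cannot be reconfigured into each other by token sliding: every token-sliding sequence of dominating sets of size 2 starting from D_s never places both tokens in V(G₂), and the token in V(G₁) can never leave the component of u. -/

import Mathlib

def MDominates {V : Type*} (G : SimpleGraph V) (D : Multiset V) : Prop :=
  ∀ v : V, ∃ d ∈ D, d = v ∨ G.Adj d v

/-- One token-sliding step between dominating multisets: slide one token along an edge. -/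
def TSStep {V : Type*} [DecidableEq V] (G : SimpleGraph V) (D D' : Multiset V) : Prop :=
  MDominates G D ∧ MDominates G D' ∧
    ∃ u v : V, G.Adj u v ∧ u ∈ D ∧ D' = v ::ₘ D.erase u

/-- The join of two graphs: disjoint union plus all edges between the parts. -/
def joinGraph {V₁ V₂ : Type*} (G₁ : SimpleGraph V₁) (G₂ : SimpleGraph V₂) :
    SimpleGraph (V₁ ⊕ V₂) where
  Adj x y :=
    match x, y with
    | Sum.inl a, Sum.inl b => G₁.Adj a b
    | Sum.inr a, Sum.inr b => G₂.Adj a b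
    | Sum.inl _, Sum.inr _ => True
    | Sum.inr _, Sum.inl _ => True
  symm := ⟨by rintro (a | a) (b | b) h <;> simp_all <;> exact h.symm⟩
  loopless := ⟨by rintro (a | a) h <;> simp_all⟩

noncomputable def dominationNumber (V : Type*) [Fintype V] (G : SimpleGraph V) : ℕ :=
  sInf {n : ℕ | ∃ D : Finset V, (∀ v : V, ∃ d ∈ D, d = v ∨ G.Adj d v) ∧ D.card = n}

lemma domNum_le {V : Type*} [Fintype V] (G : SimpleGraph V) (D : Finset V)
    (h : ∀ v : V, ∃ d ∈ D, d = v ∨ G.Adj d v) : dominationNumber V G ≤ D.card :=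
  Nat.sInf_le ⟨D, h, rfl⟩

lemma no_pair_dom {V : Type*} [DecidableEq V] [Fintype V] (G : SimpleGraph V)
    (h3 : 3 ≤ dominationNumber V G) (b c : V)
    (h : ∀ v : V, ∃ d ∈ ({b, c} : Finset V), d = v ∨ G.Adj d v) : False := by
  have hle := domNum_le G {b, c} h
  have hcard : ({b, c} : Finset V).card ≤ 2 := by
    calc ({b, c} : Finset V).card ≤ ({c} : Finset V).card + 1 := Finset.card_insert_le _ _
    _ = 2 := by simp
  omega

lemma inv_step {V₁ V₂ : Type*} [DecidableEq V₁] [DecidableEq V₂] [Fintype V₁] [Fintype V₂]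
    {G₁ : SimpleGraph V₁} {G₂ : SimpleGraph V₂}
    (h₁ : 3 ≤ dominationNumber V₁ G₁) (h₂ : 3 ≤ dominationNumber V₂ G₂)
    (u : V₁) {D D' : Multiset (V₁ ⊕ V₂)}
    (hD : ∃ a b, D = {Sum.inl a, Sum.inr b} ∧ G₁.Reachable u a)
    (hstep : TSStep (joinGraph G₁ G₂) D D') :
    ∃ a b, D' = {Sum.inl a, Sum.inr b} ∧ G₁.Reachable u a := by
  obtain ⟨a, b, rfl, hre⟩ := hD
  obtain ⟨-, hdom', x, y, hadj, hx, rfl⟩ := hstep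
  simp only [Multiset.insert_eq_cons, Multiset.mem_cons, Multiset.mem_singleton] at hx
  rcases hx with rfl | rfl
  · -- moving the V₁ token
    have herase : ({Sum.inl a, Sum.inr b} : Multiset (V₁ ⊕ V₂)).erase (Sum.inl a)
        = {Sum.inr b} := by
      simp [Multiset.insert_eq_cons]
    rw [herase] at hdom' ⊢
    rcases y with c | c
    · exact ⟨c, b, rfl, hre.trans (show G₁.Adj a c from hadj).reachable⟩
    · exfalso
      apply no_pair_dom G₂ h₂ c b
      intro z
      obtain ⟨d, hd, hor⟩ := hdom' (Sum.inr z)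
      simp only [Multiset.mem_cons, Multiset.mem_singleton] at hd
      rcases hd with rfl | rfl
      · refine ⟨c, by simp, ?_⟩
        rcases hor with h | h
        · exact Or.inl (Sum.inr.inj h)
        · exact Or.inr h
      · refine ⟨b, by simp, ?_⟩
        rcases hor with h | h
        · exact Or.inl (Sum.inr.inj h)
        · exact Or.inr h
  · -- moving the V₂ token
    have herase : ({Sum.inl a, Sum.inr b} : Multiset (V₁ ⊕ V₂)).erase (Sum.inr b)
        = {Sum.inl a} := by
      rw [Multiset.insert_eq_cons, Multiset.erase_cons_tail _ (by simp),
        Multiset.erase_singleton, Multiset.cons_zero]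
    rw [herase] at hdom' ⊢
    rcases y with c | c
    · exfalso
      apply no_pair_dom G₁ h₁ c a
      intro z
      obtain ⟨d, hd, hor⟩ := hdom' (Sum.inl z)
      simp only [Multiset.mem_cons, Multiset.mem_singleton] at hd
      rcases hd with rfl | rfl
      · refine ⟨c, by simp, ?_⟩
        rcases hor with h | h
        · exact Or.inl (Sum.inl.inj h)
        · exact Or.inr h
      · refine ⟨a, by simp, ?_⟩
        rcases hor with h | h
        · exact Or.inl (Sum.inl.inj h)
        · exact Or.inr h
    · exact ⟨a, c, by rw [Multiset.insert_eq_cons]; exact (Multiset.cons_swap _ _ _), hre⟩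

theorem join_disconnected_not_reconf
    {V₁ V₂ : Type*} [DecidableEq V₁] [DecidableEq V₂] [Fintype V₁] [Fintype V₂]
    (G₁ : SimpleGraph V₁) (G₂ : SimpleGraph V₂)
    (h₁ : 3 ≤ dominationNumber V₁ G₁) (h₂ : 3 ≤ dominationNumber V₂ G₂)
    (u w : V₁) (huw : ¬ G₁.Reachable u w) (v : V₂) :
    ¬ Relation.ReflTransGen (TSStep (joinGraph G₁ G₂))
        {Sum.inl u, Sum.inr v} {Sum.inl w, Sum.inr v} ∧
      ∀ D : Multiset (V₁ ⊕ V₂),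
        Relation.ReflTransGen (TSStep (joinGraph G₁ G₂)) {Sum.inl u, Sum.inr v} D →
          (∃ a : V₁, Sum.inl a ∈ D) ∧
          (∀ a : V₁, Sum.inl a ∈ D → G₁.Reachable u a) := by
  have key : ∀ D : Multiset (V₁ ⊕ V₂),
      Relation.ReflTransGen (TSStep (joinGraph G₁ G₂)) {Sum.inl u, Sum.inr v} D →
      ∃ a b, D = {Sum.inl a, Sum.inr b} ∧ G₁.Reachable u a := by
    intro D h
    induction h with
    | refl => exact ⟨u, v, rfl, SimpleGraph.Reachable.refl u⟩
    | tail _ hstep ih => exact inv_step h₁ h₂ u ih hstep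
  constructor
  · intro h
    obtain ⟨a, b, heq, hre⟩ := key _ h
    have : (Sum.inl w : V₁ ⊕ V₂) ∈ ({Sum.inl a, Sum.inr b} : Multiset (V₁ ⊕ V₂)) := by
      rw [← heq]; simp
    simp only [Multiset.insert_eq_cons, Multiset.mem_cons, Multiset.mem_singleton] at this
    rcases this with h' | h'
    · exact huw ((Sum.inl.inj h') ▸ hre)
    · exact absurd h' (by simp)
  · intro D h
    obtain ⟨a, b, rfl, hre⟩ := key _ h
    refine ⟨⟨a, by simp⟩, ?_⟩
    intro c hc
    simp only [Multiset.insert_eq_cons, Multiset.mem_cons, Multiset.mem_singleton] at hc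
    rcases hc with h' | h'
    · exact (Sum.inl.inj h') ▸ hre
    · exact absurd h' (by simp)
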